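/- Let H be a finite-dimensional complex inner product space and let {d_{ik}} (i ranging over a finite index set, 1 ≤ k ≤ m_i) be an orthonormal basis of H. For vectors φ_{iks} ∈ H define A_{is} = ∑_{k=1}^{m_i} |φ_{iks}⟩⟨d_{ik}|, the projections P_i = ∑_{k=1}^{m_i} |d_{ik}⟩⟨d_{ik}|, and Φ(B) = ∑_{i,s} A_{is}* B A_{is}. Then for every operator B on H and every i, Φ(B) commutes with P_i, i.e. Φ(B) P_i = P_i Φ(B). -/

import Mathlib

/-- The rank-one operator `|u⟩⟨v| : ψ ↦ ⟨v, ψ⟩ u` (inner product conjugate-linear in the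
first argument, linear in the second). -/
noncomputable def rankOne {H : Type*} [NormedAddCommGroup H] [InnerProductSpace ℂ H]
    (u v : H) : H →ₗ[ℂ] H where
  toFun ψ := (inner ℂ v ψ : ℂ) • u
  map_add' x y := by simp [inner_add_right, add_smul]
  map_smul' c x := by simp [inner_smul_right, smul_smul]

lemma rankOne_apply {H : Type*} [NormedAddCommGroup H] [InnerProductSpace ℂ H]
    (u v ψ : H) : rankOne u v ψ = (inner ℂ v ψ : ℂ) • u := rfl

lemma rankOne_comp {H : Type*} [NormedAddCommGroup H] [InnerProductSpace ℂ H]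
    (u v x y : H) :
    rankOne u v ∘ₗ rankOne x y = (inner ℂ v x : ℂ) • rankOne u y := by
  ext ψ
  simp [rankOne_apply, inner_smul_right, smul_smul, mul_comm]

lemma rankOne_adjoint {H : Type*} [NormedAddCommGroup H] [InnerProductSpace ℂ H]
    [FiniteDimensional ℂ H] (u v : H) :
    LinearMap.adjoint (rankOne u v) = rankOne v u := by
  refine ((LinearMap.eq_adjoint_iff _ _).mpr ?_).symm
  intro x y
  simp [rankOne_apply, inner_smul_left, inner_smul_right, mul_comm]


lemma sum_compL {H : Type*} [NormedAddCommGroup H] [InnerProductSpace ℂ H]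
    {α : Type*} (t : Finset α) (f : α → (H →ₗ[ℂ] H)) (g : H →ₗ[ℂ] H) :
    (∑ a ∈ t, f a) ∘ₗ g = ∑ a ∈ t, f a ∘ₗ g := by
  ext ψ; simp

lemma comp_sumL {H : Type*} [NormedAddCommGroup H] [InnerProductSpace ℂ H]
    {α : Type*} (t : Finset α) (f : α → (H →ₗ[ℂ] H)) (g : H →ₗ[ℂ] H) :
    g ∘ₗ (∑ a ∈ t, f a) = ∑ a ∈ t, g ∘ₗ f a := by
  ext ψ; simp

/-- STATEMENT 5: for a PVM `P_i = ∑_k |d_{ik}⟩⟨d_{ik}|` coming from an orthonormal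
basis `{d_{ik}}` and an instrument with Kraus operators `A_{is} = ∑_k |φ_{iks}⟩⟨d_{ik}|`
and total channel `Φ(B) = ∑_{i,s} A_{is}* B A_{is}`, the total channel output `Φ(B)` commutes
with each `P_i`: `Φ(B) P_i = P_i Φ(B)`. -/
theorem stmt_6 {H : Type*} [NormedAddCommGroup H] [InnerProductSpace ℂ H]
    [FiniteDimensional ℂ H] {ι : Type*} [Fintype ι] (m r : ι → ℕ)
    (b : OrthonormalBasis (Σ i : ι, Fin (m i)) ℂ H)
    (φ : (i : ι) → Fin (m i) → Fin (r i) → H)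
    (A : (i : ι) → Fin (r i) → (H →ₗ[ℂ] H))
    (hA : ∀ i s, A i s = ∑ k : Fin (m i), rankOne (φ i k s) (b ⟨i, k⟩))
    (P : ι → (H →ₗ[ℂ] H))
    (hP : ∀ i, P i = ∑ k : Fin (m i), rankOne (b ⟨i, k⟩) (b ⟨i, k⟩))
    (Φ : (H →ₗ[ℂ] H) → (H →ₗ[ℂ] H))
    (hΦ : ∀ B, Φ B = ∑ i : ι, ∑ s : Fin (r i),
      LinearMap.adjoint (A i s) ∘ₗ B ∘ₗ A i s)
    (B : H →ₗ[ℂ] H) (i : ι) :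
    Φ B ∘ₗ P i = P i ∘ₗ Φ B := by
  classical
  have hb := orthonormal_iff_ite.mp b.orthonormal
  have hPadj : LinearMap.adjoint (P i) = P i := by
    rw [hP, map_sum]
    simp [rankOne_adjoint]
  have key : ∀ j (s : Fin (r j)), A j s ∘ₗ P i = if j = i then A j s else 0 := by
    intro j s
    rw [hA, hP, sum_compL _]
    by_cases h : j = i
    · subst h
      simp only [comp_sumL _, rankOne_comp, hb, Sigma.mk.inj_iff, heq_eq_eq, true_and]
      simp [Finset.sum_ite_eq, apply_ite, Finset.sum_ite_eq']
    · simp only [comp_sumL _, rankOne_comp, hb, Sigma.mk.inj_iff, h, false_and,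
        if_false, if_neg, zero_smul, Finset.sum_const_zero]
  have term : ∀ j (s : Fin (r j)),
      (LinearMap.adjoint (A j s) ∘ₗ B ∘ₗ A j s) ∘ₗ P i
        = P i ∘ₗ (LinearMap.adjoint (A j s) ∘ₗ B ∘ₗ A j s) := by
    intro j s
    have h1 : P i ∘ₗ LinearMap.adjoint (A j s) = LinearMap.adjoint (A j s ∘ₗ P i) := by
      rw [LinearMap.adjoint_comp, hPadj]
    rw [LinearMap.comp_assoc, LinearMap.comp_assoc, key, ← LinearMap.comp_assoc, ← LinearMap.comp_assoc, h1, key]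
    by_cases h : j = i <;> simp [h, LinearMap.comp_assoc]
  rw [hΦ, sum_compL _, comp_sumL _]
  refine Finset.sum_congr rfl fun j _ => ?_
  rw [sum_compL _, comp_sumL _]
  exact Finset.sum_congr rfl fun s _ => term j s
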